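/- Let f : ℝ^p → ℝ be convex and differentiable with ∇f Lipschitz continuous with constant 1/μ with respect to ‖·‖₂ (f playing the role of the conjugate R* of a μ-strongly convex R), and let h : ℝⁿ → ℝ be differentiable and (1/(nγ))-strongly convex with respect to ‖·‖₂. Define g(w) := f(−(1/n)Xᵀw). Then for every w ∈ ℝⁿ, every coordinate j ∈ {1,…,n}, and every t ∈ ℝ: g(w + t e_j) ≤ g(w) + t · (∂g/∂w_j)(w) + (γ‖x_j‖₂²/(nμ)) · D_h(w + t e_j, w). Consequently, the function F := g + h (which equals −D when f = R* and h(w) = (1/n)Σ l_j*(w_j)) is coordinate-wise σ-smooth relative to h with σ = γ·max_{1≤j≤n}‖x_j‖₂²/(nμ) + 1. -/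

import Mathlib

open scoped BigOperators

section aux

variable {E : Type*} [NormedAddCommGroup E] [InnerProductSpace ℝ E] [CompleteSpace E]

lemma inner_gradient_eq (f : E → ℝ) (x v : E) :
    (inner ℝ (gradient f x) v : ℝ) = fderiv ℝ f x v := by
  rw [gradient, InnerProductSpace.toDual_symm_apply]

lemma descent_1d (φ : ℝ → ℝ) (L : ℝ) (hL : 0 ≤ L)
    (hdiff : Differentiable ℝ φ) (hcont : Continuous (deriv φ))
    (hlip : ∀ s, |deriv φ s - deriv φ 0| ≤ L * |s|) :
    φ 1 ≤ φ 0 + deriv φ 0 + L / 2 := by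
  have hFTC : ∫ s in (0:ℝ)..1, deriv φ s = φ 1 - φ 0 :=
    intervalIntegral.integral_deriv_eq_sub (fun x _ => hdiff x)
      (hcont.intervalIntegrable 0 1)
  have hmono : ∫ s in (0:ℝ)..1, deriv φ s ≤ ∫ s in (0:ℝ)..1, (deriv φ 0 + L * s) := by
    apply intervalIntegral.integral_mono_on (by norm_num)
      (hcont.intervalIntegrable 0 1)
      ((by fun_prop : Continuous fun s : ℝ => deriv φ 0 + L * s).intervalIntegrable 0 1)
    intro s hs
    have h1 := (abs_le.1 (hlip s)).2
    rw [abs_of_nonneg hs.1] at h1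
    linarith
  have hval : ∫ s in (0:ℝ)..1, (deriv φ 0 + L * s) = deriv φ 0 + L / 2 := by
    rw [intervalIntegral.integral_add (intervalIntegrable_const)
      ((by fun_prop : Continuous fun s : ℝ => L * s).intervalIntegrable 0 1),
      intervalIntegral.integral_const, intervalIntegral.integral_const_mul, integral_id]
    norm_num [mul_one_div]
  rw [hFTC] at hmono
  rw [hval] at hmono
  linarith

lemma descent_vec (f : E → ℝ) (μ : ℝ) (hμ : 0 < μ) (hfdiff : Differentiable ℝ f)
    (hflip : ∀ y z, ‖gradient f y - gradient f z‖ ≤ (1 / μ) * ‖y - z‖) (b v : E) :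
    f (b + v) ≤ f b + (inner ℝ (gradient f b) v : ℝ) + ‖v‖ ^ 2 / (2 * μ) := by
  set φ : ℝ → ℝ := fun s => f (b + s • v) with hφ
  have hc : ∀ s : ℝ, HasDerivAt (fun s : ℝ => b + s • v) v s := by
    intro s
    simpa using ((hasDerivAt_id s).smul_const v).const_add b
  have hφ' : ∀ s : ℝ, HasDerivAt φ ((inner ℝ (gradient f (b + s • v)) v : ℝ)) s := by
    intro s
    have := ((hfdiff (b + s • v)).hasFDerivAt).comp_hasDerivAt s (hc s)
    rwa [← inner_gradient_eq] at this
  have hderiv : deriv φ = fun s => (inner ℝ (gradient f (b + s • v)) v : ℝ) :=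
    funext fun s => (hφ' s).deriv
  have hgradcont : Continuous (gradient f) := by
    refine LipschitzWith.continuous (K := Real.toNNReal (1 / μ)) ?_
    refine LipschitzWith.of_dist_le_mul fun y z => ?_
    rw [dist_eq_norm, dist_eq_norm, Real.coe_toNNReal _ (by positivity : (0:ℝ) ≤ 1/μ)]
    exact hflip y z
  have hcont : Continuous (deriv φ) := by
    rw [hderiv]
    exact (hgradcont.comp (continuous_const.add (continuous_id.smul continuous_const))).inner
      continuous_const
  have hlip : ∀ s, |deriv φ s - deriv φ 0| ≤ (‖v‖ ^ 2 / μ) * |s| := by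
    intro s
    rw [hderiv]
    simp only [zero_smul, add_zero]
    rw [← inner_sub_left]
    calc |(inner ℝ (gradient f (b + s • v) - gradient f b) v : ℝ)|
        ≤ ‖gradient f (b + s • v) - gradient f b‖ * ‖v‖ := abs_real_inner_le_norm _ _
      _ ≤ ((1 / μ) * ‖(b + s • v) - b‖) * ‖v‖ :=
          mul_le_mul_of_nonneg_right (hflip _ _) (norm_nonneg v)
      _ = (‖v‖ ^ 2 / μ) * |s| := by
          rw [add_sub_cancel_left, norm_smul]
          simp [Real.norm_eq_abs]
          ring
  have := descent_1d φ (‖v‖ ^ 2 / μ) (by positivity)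
    (fun s => (hφ' s).differentiableAt) hcont hlip
  have h0 : (deriv φ) 0 = (inner ℝ (gradient f b) v : ℝ) := by
    rw [hderiv]; simp
  rw [h0] at this
  simpa [hφ, div_div, mul_comm μ 2] using this

end aux

/-- The Bregman distance of a differentiable reference function on Euclidean space. -/
noncomputable def bregE {n : ℕ} (h : EuclideanSpace ℝ (Fin n) → ℝ)
    (y x : EuclideanSpace ℝ (Fin n)) : ℝ :=
  h y - h x - (inner ℝ (gradient h x) (y - x) : ℝ)

set_option maxHeartbeats 2000000

theorem stmt8 (n p : ℕ) [NeZero n] (hp : 0 < p)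
    (x : Fin n → EuclideanSpace ℝ (Fin p)) (γ μ : ℝ) (hγ : 0 < γ) (hμ : 0 < μ)
    -- f plays the role of R*, convex with (1/μ)-Lipschitz gradient w.r.t. ‖·‖₂
    (f : EuclideanSpace ℝ (Fin p) → ℝ)
    (hfconv : ConvexOn ℝ Set.univ f) (hfdiff : Differentiable ℝ f)
    (hflip : ∀ y z, ‖gradient f y - gradient f z‖ ≤ (1 / μ) * ‖y - z‖)
    -- h differentiable and (1/(nγ))-strongly convex w.r.t. ‖·‖₂
    (h : EuclideanSpace ℝ (Fin n) → ℝ) (hhdiff : Differentiable ℝ h)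
    (hhsc : ∀ y z, h y ≥ h z + (inner ℝ (gradient h z) (y - z) : ℝ)
        + (1 / (2 * (n : ℝ) * γ)) * ‖y - z‖ ^ 2)
    -- g(w) := f(−(1/n) Xᵀ w)
    (g : EuclideanSpace ℝ (Fin n) → ℝ)
    (hg : ∀ w, g w = f (WithLp.toLp 2 (fun i => -(1 / (n : ℝ)) * ∑ j, x j i * w j))) :
    (∀ (w : EuclideanSpace ℝ (Fin n)) (j : Fin n) (t : ℝ),
        g (w + t • EuclideanSpace.single j 1)
          ≤ g w + t * gradient g w j
            + (γ * ‖x j‖ ^ 2 / ((n : ℝ) * μ))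
              * bregE h (w + t • EuclideanSpace.single j 1) w)
      ∧ (∀ (w : EuclideanSpace ℝ (Fin n)) (j : Fin n) (t : ℝ),
          g (w + t • EuclideanSpace.single j 1) + h (w + t • EuclideanSpace.single j 1)
            ≤ g w + h w
              + t * gradient (fun u => g u + h u) w j
              + (γ * (Finset.univ.sup' Finset.univ_nonempty fun j' => ‖x j'‖ ^ 2)
                    / ((n : ℝ) * μ) + 1)
                * bregE h (w + t • EuclideanSpace.single j 1) w) := by
  have hn : (0:ℝ) < n := by
    exact_mod_cast Nat.pos_of_ne_zero (NeZero.ne n)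
  set u : Fin n → EuclideanSpace ℝ (Fin p) := fun j => (-(1 / (n:ℝ))) • x j with hu
  set A : EuclideanSpace ℝ (Fin n) →L[ℝ] EuclideanSpace ℝ (Fin p) :=
    ∑ j, (EuclideanSpace.proj j).smulRight (u j) with hA
  have hAapp : ∀ w : EuclideanSpace ℝ (Fin n), A w = ∑ j, w j • u j := by
    intro w
    simp [hA, ContinuousLinearMap.sum_apply]
  have hgA : ∀ w, g w = f (A w) := by
    intro w
    rw [hg]
    congr 1
    ext i
    rw [hAapp, PiLp.toLp_apply]
    have : (∑ j, w j • u j) i = ∑ j, (w j • u j) i := by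
      simp
    rw [this, Finset.mul_sum]
    refine Finset.sum_congr rfl fun j _ => ?_
    simp [hu, PiLp.smul_apply]
    ring
  have hgfun : g = fun w => f (A w) := funext hgA
  have hgderiv : ∀ w, HasFDerivAt g ((fderiv ℝ f (A w)).comp (A : _ →L[ℝ] _)) w := by
    intro w
    rw [hgfun]
    exact ((hfdiff (A w)).hasFDerivAt).comp w A.hasFDerivAt
  have hAsingle : ∀ j : Fin n, A (EuclideanSpace.single j 1) = u j := by
    intro j
    rw [hAapp]
    rw [Finset.sum_eq_single j]
    · simp [EuclideanSpace.single_apply]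
    · intro j' _ hj'
      simp [EuclideanSpace.single_apply, hj']
    · simp
  -- coordinates of gradients via inner products
  have hcoord : ∀ (φ : EuclideanSpace ℝ (Fin n) → ℝ) (w : EuclideanSpace ℝ (Fin n)) (j : Fin n),
      gradient φ w j = fderiv ℝ φ w (EuclideanSpace.single j 1) := by
    intro φ w j
    rw [← inner_gradient_eq, EuclideanSpace.inner_single_right]
    simp
  have hgradg : ∀ (w : EuclideanSpace ℝ (Fin n)) (j : Fin n),
      gradient g w j = (inner ℝ (gradient f (A w)) (u j) : ℝ) := by
    intro w j
    rw [hcoord, (hgderiv w).fderiv]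
    rw [inner_gradient_eq]
    simp [ContinuousLinearMap.comp_apply, hAsingle j]
  have hnormu : ∀ j : Fin n, ‖u j‖ = ‖x j‖ / n := by
    intro j
    rw [hu]
    simp only [norm_smul, norm_neg, Real.norm_eq_abs]
    rw [abs_of_nonneg (by positivity : (0:ℝ) ≤ 1 / (n:ℝ))]
    ring
  -- Bregman distance lower bound
  have hbreg : ∀ (w : EuclideanSpace ℝ (Fin n)) (j : Fin n) (t : ℝ),
      t ^ 2 / (2 * (n:ℝ) * γ) ≤ bregE h (w + t • EuclideanSpace.single j 1) w := by
    intro w j t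
    have := hhsc (w + t • EuclideanSpace.single j 1) w
    have hnorm : ‖(w + t • EuclideanSpace.single j 1) - w‖ ^ 2 = t ^ 2 := by
      rw [add_sub_cancel_left, norm_smul]
      simp [EuclideanSpace.norm_single, Real.norm_eq_abs, sq_abs]
    rw [hnorm] at this
    rw [bregE]
    have h2 : (1 / (2 * (n:ℝ) * γ)) * t ^ 2 = t ^ 2 / (2 * (n:ℝ) * γ) := by ring
    linarith [this]
  -- main per-coordinate estimate for g
  have main1 : ∀ (w : EuclideanSpace ℝ (Fin n)) (j : Fin n) (t : ℝ),
      g (w + t • EuclideanSpace.single j 1)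
        ≤ g w + t * gradient g w j + t ^ 2 * ‖x j‖ ^ 2 / (2 * μ * (n:ℝ) ^ 2) := by
    intro w j t
    have hAy : A (w + t • EuclideanSpace.single j 1) = A w + t • u j := by
      rw [map_add, map_smul, hAsingle]
    have := descent_vec f μ hμ hfdiff hflip (A w) (t • u j)
    rw [hgA, hgA w, hAy]
    calc f (A w + t • u j)
        ≤ f (A w) + (inner ℝ (gradient f (A w)) (t • u j) : ℝ) + ‖t • u j‖ ^ 2 / (2 * μ) := this
      _ = f (A w) + t * gradient g w j + t ^ 2 * ‖x j‖ ^ 2 / (2 * μ * (n:ℝ) ^ 2) := by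
          rw [real_inner_smul_right, hgradg, norm_smul, mul_pow, hnormu]
          rw [Real.norm_eq_abs, sq_abs]
          field_simp
  have part1 : ∀ (w : EuclideanSpace ℝ (Fin n)) (j : Fin n) (t : ℝ),
      g (w + t • EuclideanSpace.single j 1)
        ≤ g w + t * gradient g w j
          + (γ * ‖x j‖ ^ 2 / ((n : ℝ) * μ))
            * bregE h (w + t • EuclideanSpace.single j 1) w := by
    intro w j t
    have h1 := main1 w j t
    have h2 := hbreg w j t
    have hc : (0:ℝ) ≤ γ * ‖x j‖ ^ 2 / ((n : ℝ) * μ) := by positivity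
    have h3 : (γ * ‖x j‖ ^ 2 / ((n : ℝ) * μ)) * (t ^ 2 / (2 * (n:ℝ) * γ))
        ≤ (γ * ‖x j‖ ^ 2 / ((n : ℝ) * μ)) * bregE h (w + t • EuclideanSpace.single j 1) w :=
      mul_le_mul_of_nonneg_left h2 hc
    have h4 : (γ * ‖x j‖ ^ 2 / ((n : ℝ) * μ)) * (t ^ 2 / (2 * (n:ℝ) * γ))
        = t ^ 2 * ‖x j‖ ^ 2 / (2 * μ * (n:ℝ) ^ 2) := by
      field_simp
    linarith
  refine ⟨part1, ?_⟩
  intro w j t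
  set y := w + t • EuclideanSpace.single j 1 with hy
  set D := bregE h y w with hD
  have hDlb := hbreg w j t
  have hDnn : 0 ≤ D := le_trans (by positivity) hDlb
  -- h identity
  have hhy : h y = h w + t * gradient h w j + D := by
    have hinner : (inner ℝ (gradient h w) (y - w) : ℝ) = t * gradient h w j := by
      rw [hy, add_sub_cancel_left, real_inner_smul_right]
      congr 1
      simp [EuclideanSpace.inner_single_right]
      exact (hcoord h w j).symm
    rw [hD, bregE, hinner]
    ring
  -- gradient of the sum
  have hgsum : gradient (fun u => g u + h u) w j = gradient g w j + gradient h w j := by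
    rw [hcoord, hcoord, hcoord]
    rw [fderiv_fun_add ((hgderiv w).differentiableAt) (hhdiff w)]
    simp
  -- sup bound
  have hsup : ‖x j‖ ^ 2 ≤ Finset.univ.sup' Finset.univ_nonempty fun j' => ‖x j'‖ ^ 2 :=
    Finset.le_sup' (fun j' => ‖x j'‖ ^ 2) (Finset.mem_univ j)
  have hcoef : γ * ‖x j‖ ^ 2 / ((n : ℝ) * μ)
      ≤ γ * (Finset.univ.sup' Finset.univ_nonempty fun j' => ‖x j'‖ ^ 2) / ((n : ℝ) * μ) := by
    gcongr
  have h1 := part1 w j t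
  rw [← hy, ← hD] at h1
  have h5 : (γ * ‖x j‖ ^ 2 / ((n : ℝ) * μ)) * D
      ≤ (γ * (Finset.univ.sup' Finset.univ_nonempty fun j' => ‖x j'‖ ^ 2) / ((n : ℝ) * μ)) * D :=
    mul_le_mul_of_nonneg_right hcoef hDnn
  rw [hgsum]
  linarith
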